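/- arXiv:2111.11006 — 2 statements merged into one kernel-verified Lean document; each statement's English description precedes it below -/
import Mathlib

section
/- Let G₁ be a simple connected graph with n₁ vertices and m₁ edges, let S(G₁) be its subdivision graph with m₁' = 2m₁ edges, and let G₂ be a simple connected graph with n₂ vertices and m₂ edges. Then the first hyper Zagreb index of the subdivision vertex join satisfies HM₁(G₁ ∔ G₂) = m₁[5·M₁(G₂) + 4m₁m₂] + HM₁(G₂) + m₁'(2 + n₂)² + m₁(m₁ + n₂ + 2)[n₂(m₁ + n₂ + 2) + 4m₂] + Σ_{uv∈E(S(G₁))} [d_{G₁}(u)² + (4 + 2n₂)·d_{G₁}(u)], where in the last sum each edge of S(G₁) joins an original vertex u ∈ V(G₁) to a subdivision vertex, and d_{G₁}(u) is the degree of that original endpoint u in G₁. -/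
open Finset

/-- The subdivision graph `S(G)`: one new vertex inserted on every edge of `G`. -/
def subdivisionGraph {V₁ : Type*} (G : SimpleGraph V₁) : SimpleGraph (V₁ ⊕ G.edgeSet) where
  Adj x y :=
    match x, y with
    | Sum.inl u, Sum.inr e => u ∈ (e : Sym2 V₁)
    | Sum.inr e, Sum.inl u => u ∈ (e : Sym2 V₁)
    | _, _ => False
  symm := by
    constructor
    rintro (u | e) (v | f) h
    · exact h.elim
    · exact h
    · exact h
    · exact h.elim
  loopless := by constructor; rintro (u | e) h <;> exact h

instance subdivisionGraph.adjDecidable {V₁ : Type*} (G : SimpleGraph V₁) [DecidableEq V₁] :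
    DecidableRel (subdivisionGraph G).Adj
  | Sum.inl u, Sum.inr e => inferInstanceAs (Decidable (u ∈ (e : Sym2 V₁)))
  | Sum.inr e, Sum.inl u => inferInstanceAs (Decidable (u ∈ (e : Sym2 V₁)))
  | Sum.inl _, Sum.inl _ => inferInstanceAs (Decidable False)
  | Sum.inr _, Sum.inr _ => inferInstanceAs (Decidable False)

/-- The subdivision vertex join `G₁ ∔ G₂`: the disjoint union of `S(G₁)` and `G₂`,
with every subdivision (new) vertex of `S(G₁)` joined to every vertex of `G₂`. -/
def subdivisionVertexJoin {V₁ V₂ : Type*} (G₁ : SimpleGraph V₁) (G₂ : SimpleGraph V₂) :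
    SimpleGraph (V₁ ⊕ G₁.edgeSet ⊕ V₂) where
  Adj x y :=
    match x, y with
    | Sum.inl u, Sum.inr (Sum.inl e) => u ∈ (e : Sym2 V₁)
    | Sum.inr (Sum.inl e), Sum.inl u => u ∈ (e : Sym2 V₁)
    | Sum.inr (Sum.inl _), Sum.inr (Sum.inr _) => True
    | Sum.inr (Sum.inr _), Sum.inr (Sum.inl _) => True
    | Sum.inr (Sum.inr u), Sum.inr (Sum.inr v) => G₂.Adj u v
    | _, _ => False
  symm := by
    constructor
    rintro (u | e | u) (v | f | v) h <;> first | exact h.elim | exact h | trivial | exact h.symm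
  loopless := by
    constructor
    rintro (u | e | u) h
    · exact h
    · exact h
    · exact G₂.loopless.irrefl u h

instance subdivisionVertexJoin.adjDecidable {V₁ V₂ : Type*} (G₁ : SimpleGraph V₁)
    (G₂ : SimpleGraph V₂) [DecidableEq V₁] [DecidableRel G₂.Adj] :
    DecidableRel (subdivisionVertexJoin G₁ G₂).Adj
  | Sum.inl u, Sum.inr (Sum.inl e) => inferInstanceAs (Decidable (u ∈ (e : Sym2 V₁)))
  | Sum.inr (Sum.inl e), Sum.inl u => inferInstanceAs (Decidable (u ∈ (e : Sym2 V₁)))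
  | Sum.inr (Sum.inl _), Sum.inr (Sum.inr _) => inferInstanceAs (Decidable True)
  | Sum.inr (Sum.inr _), Sum.inr (Sum.inl _) => inferInstanceAs (Decidable True)
  | Sum.inr (Sum.inr u), Sum.inr (Sum.inr v) => inferInstanceAs (Decidable (G₂.Adj u v))
  | Sum.inl _, Sum.inl _ => inferInstanceAs (Decidable False)
  | Sum.inl _, Sum.inr (Sum.inr _) => inferInstanceAs (Decidable False)
  | Sum.inr (Sum.inr _), Sum.inl _ => inferInstanceAs (Decidable False)
  | Sum.inr (Sum.inl _), Sum.inr (Sum.inl _) => inferInstanceAs (Decidable False)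

/-- First Zagreb index `M₁(G) = ∑ v, d(v)²`. -/
def firstZagreb {V : Type*} [Fintype V] (G : SimpleGraph V) [DecidableRel G.Adj] : ℤ :=
  ∑ v, (G.degree v : ℤ) ^ 2

/-- Forgotten topological index `F(G) = ∑ v, d(v)³`. -/
def forgottenIndex {V : Type*} [Fintype V] (G : SimpleGraph V) [DecidableRel G.Adj] : ℤ :=
  ∑ v, (G.degree v : ℤ) ^ 3

/-- First hyper Zagreb index `HM₁(G) = ∑_{uv ∈ E(G)} (d(u) + d(v))²`. -/
def hyperZagreb {V : Type*} [Fintype V] [DecidableEq V] (G : SimpleGraph V)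
    [DecidableRel G.Adj] : ℤ :=
  ∑ e ∈ G.edgeFinset,
    Sym2.lift ⟨fun u v => ((G.degree u : ℤ) + (G.degree v : ℤ)) ^ 2, fun _ _ => by ring⟩ e

/-- Reduced second Zagreb index `RM₂(G) = ∑_{uv ∈ E(G)} (d(u) - 1)(d(v) - 1)`. -/
def reducedSecondZagreb {V : Type*} [Fintype V] [DecidableEq V] (G : SimpleGraph V)
    [DecidableRel G.Adj] : ℤ :=
  ∑ e ∈ G.edgeFinset,
    Sym2.lift ⟨fun u v => ((G.degree u : ℤ) - 1) * ((G.degree v : ℤ) - 1), fun _ _ => by ring⟩ e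


set_option linter.unusedSectionVars false
section Helpers
open SimpleGraph

lemma sum_ite_adj {V : Type*} [Fintype V] (G : SimpleGraph V) [DecidableRel G.Adj]
    (v : V) (c : ℤ) :
    ∑ w, (if G.Adj v w then c else 0) = (G.degree v : ℤ) * c := by
  rw [← Finset.sum_filter, Finset.sum_const, ← neighborFinset_eq_filter,
    card_neighborFinset_eq_degree, nsmul_eq_mul]

lemma sum_ite_mem_edge {V : Type*} [Fintype V] [DecidableEq V] (G : SimpleGraph V)
    [DecidableRel G.Adj] (u : V) (c : ℤ) :
    ∑ e : G.edgeSet, (if u ∈ (e : Sym2 V) then c else 0) = (G.degree u : ℤ) * c := by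
  rw [← Finset.sum_subtype G.edgeFinset (fun e => mem_edgeFinset) 
      (fun e => if u ∈ (e : Sym2 V) then c else 0),
    ← Finset.sum_filter, ← incidenceFinset_eq_filter, Finset.sum_const,
    card_incidenceFinset_eq_degree, nsmul_eq_mul]

lemma sum_ite_mem_two {V : Type*} [Fintype V] [DecidableEq V] (G : SimpleGraph V)
    (e : G.edgeSet) (c : ℤ) :
    ∑ u : V, (if u ∈ (e : Sym2 V) then c else 0) = 2 * c := by
  obtain ⟨e, he⟩ := e
  induction e with
  | _ a b =>
    rw [mem_edgeSet] at he
    have hne : a ≠ b := he.ne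
    have : ∀ u : V, (if u ∈ (s(a, b) : Sym2 V) then c else 0)
        = (if u = a then c else 0) + (if u = b then c else 0) := by
      intro u
      by_cases h1 : u = a <;> by_cases h2 : u = b <;>
        simp_all [Sym2.mem_iff]
    simp only [this]
    rw [Finset.sum_add_distrib, Finset.sum_ite_eq' _ a, Finset.sum_ite_eq' _ b]
    simp; ring

lemma sum_adj_eq_two_mul {V : Type*} [Fintype V] [DecidableEq V] (G : SimpleGraph V)
    [DecidableRel G.Adj] (f : V → V → ℤ) (hf : ∀ a b, f a b = f b a) :
    ∑ u, ∑ v, (if G.Adj u v then f u v else 0)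
      = 2 * ∑ e ∈ G.edgeFinset, Sym2.lift ⟨f, hf⟩ e := by
  have h1 : ∑ u, ∑ v, (if G.Adj u v then f u v else 0)
      = ∑ d : G.Dart, f d.fst d.snd := by
    rw [← Finset.sum_product']
    rw [← Finset.sum_filter]
    refine (Finset.sum_bij' (fun xy h => (⟨xy, (Finset.mem_filter.1 h).2⟩ : G.Dart))
      (fun (d : G.Dart) _ => (d.fst, d.snd)) ?_ ?_ ?_ ?_ ?_) <;> simp
  rw [h1, ← Finset.sum_fiberwise_of_maps_to (g := Dart.edge) (t := G.edgeFinset)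
    (fun d _ => by rw [mem_edgeFinset]; exact d.edge_mem), Finset.mul_sum]
  refine Finset.sum_congr rfl fun e he => ?_
  rw [mem_edgeFinset] at he
  induction e with
  | _ a b =>
    have hab : G.Adj a b := he
    let d : G.Dart := ⟨(a, b), hab⟩
    have hfib : ({d' : G.Dart | d'.edge = s(a,b)} : Finset _) = {d, d.symm} := by
      have := d.edge_fiber
      exact this
    rw [show (Finset.univ.filter fun d' : G.Dart => d'.edge = s(a,b)) = {d, d.symm} from hfib]
    rw [Finset.sum_pair (by exact d.symm_ne.symm)]
    simp only [Sym2.lift_mk]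
    show f a b + f b a = 2 * f a b
    rw [hf b a]; ring

lemma degree_int {V : Type*} [Fintype V] (G : SimpleGraph V) [DecidableRel G.Adj] (v : V) :
    (G.degree v : ℤ) = ∑ w, (if G.Adj v w then 1 else 0) := by
  rw [sum_ite_adj G v 1, mul_one]

lemma card_edgeSet_int {V : Type*} [Fintype V] [DecidableEq V] (G : SimpleGraph V)
    [DecidableRel G.Adj] :
    ∑ _e : G.edgeSet, (1 : ℤ) = (G.edgeFinset.card : ℤ) := by
  rw [Finset.sum_const, Finset.card_univ, nsmul_eq_mul, mul_one]
  congr 1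
  rw [edgeFinset, Set.toFinset_card]

section Deg
variable {V₁ V₂ : Type*} [Fintype V₁] [Fintype V₂] [DecidableEq V₁] [DecidableEq V₂]
  (G₁ : SimpleGraph V₁) (G₂ : SimpleGraph V₂) [DecidableRel G₁.Adj] [DecidableRel G₂.Adj]

lemma svj_deg_inl (u : V₁) :
    ((subdivisionVertexJoin G₁ G₂).degree (Sum.inl u) : ℤ) = (G₁.degree u : ℤ) := by
  rw [degree_int, Fintype.sum_sum_type, Fintype.sum_sum_type]
  have h1 : ∀ v : V₁, (subdivisionVertexJoin G₁ G₂).Adj (Sum.inl u) (Sum.inl v) = False :=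
    fun _ => rfl
  have h2 : ∀ e : G₁.edgeSet, (subdivisionVertexJoin G₁ G₂).Adj (Sum.inl u) (Sum.inr (Sum.inl e))
      = (u ∈ (e : Sym2 V₁)) := fun _ => rfl
  have h3 : ∀ v : V₂, (subdivisionVertexJoin G₁ G₂).Adj (Sum.inl u) (Sum.inr (Sum.inr v)) = False :=
    fun _ => rfl
  simp only [h1, h2, h3, if_false, Finset.sum_const_zero, add_zero, zero_add]
  rw [show (∑ e : G₁.edgeSet, if u ∈ (e : Sym2 V₁) then (1:ℤ) else 0) = (G₁.degree u : ℤ) * 1 from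
    sum_ite_mem_edge G₁ u 1, mul_one]

lemma svj_deg_mid (e : G₁.edgeSet) :
    ((subdivisionVertexJoin G₁ G₂).degree (Sum.inr (Sum.inl e)) : ℤ)
      = 2 + (Fintype.card V₂ : ℤ) := by
  rw [degree_int, Fintype.sum_sum_type, Fintype.sum_sum_type]
  have h1 : ∀ u : V₁, (subdivisionVertexJoin G₁ G₂).Adj (Sum.inr (Sum.inl e)) (Sum.inl u)
      = (u ∈ (e : Sym2 V₁)) := fun _ => rfl
  have h2 : ∀ f : G₁.edgeSet,
      (subdivisionVertexJoin G₁ G₂).Adj (Sum.inr (Sum.inl e)) (Sum.inr (Sum.inl f)) = False :=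
    fun _ => rfl
  have h3 : ∀ v : V₂,
      (subdivisionVertexJoin G₁ G₂).Adj (Sum.inr (Sum.inl e)) (Sum.inr (Sum.inr v)) = True :=
    fun _ => rfl
  simp only [h1, h2, h3, if_false, if_true, Finset.sum_const_zero, add_zero, zero_add]
  rw [sum_ite_mem_two G₁ e 1, Finset.sum_const, Finset.card_univ, nsmul_eq_mul]
  ring

lemma svj_deg_inr (v : V₂) :
    ((subdivisionVertexJoin G₁ G₂).degree (Sum.inr (Sum.inr v)) : ℤ)
      = (G₁.edgeFinset.card : ℤ) + (G₂.degree v : ℤ) := by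
  rw [degree_int, Fintype.sum_sum_type, Fintype.sum_sum_type]
  have h1 : ∀ u : V₁, (subdivisionVertexJoin G₁ G₂).Adj (Sum.inr (Sum.inr v)) (Sum.inl u)
      = False := fun _ => rfl
  have h2 : ∀ f : G₁.edgeSet,
      (subdivisionVertexJoin G₁ G₂).Adj (Sum.inr (Sum.inr v)) (Sum.inr (Sum.inl f)) = True :=
    fun _ => rfl
  have h3 : ∀ w : V₂,
      (subdivisionVertexJoin G₁ G₂).Adj (Sum.inr (Sum.inr v)) (Sum.inr (Sum.inr w))
      = G₂.Adj v w := fun _ => rfl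
  simp only [h1, h2, h3, if_false, if_true, Finset.sum_const_zero, add_zero, zero_add]
  rw [card_edgeSet_int, ← degree_int]

end Deg
end Helpers

section MoreHelpers
open SimpleGraph
variable {V : Type*} [Fintype V] [DecidableEq V] (G : SimpleGraph V) [DecidableRel G.Adj]

lemma sum_deg_int : ∑ v, (G.degree v : ℤ) = 2 * (G.edgeFinset.card : ℤ) := by
  have := G.sum_degrees_eq_twice_card_edges
  exact_mod_cast congrArg (Nat.cast : ℕ → ℤ) this

lemma sum_block_uE (c : V → ℤ) :
    ∑ u, ∑ e : G.edgeSet, (if u ∈ (e : Sym2 V) then c u else 0)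
      = ∑ u, (G.degree u : ℤ) * c u :=
  Finset.sum_congr rfl fun u _ => sum_ite_mem_edge G u (c u)

lemma sum_block_Eu (c : V → ℤ) :
    ∑ e : G.edgeSet, ∑ u, (if u ∈ (e : Sym2 V) then c u else 0)
      = ∑ u, (G.degree u : ℤ) * c u := by
  rw [Finset.sum_comm]; exact sum_block_uE G c

lemma sum_adj_deg :
    ∑ v, ∑ w, (if G.Adj v w then ((G.degree v : ℤ) + (G.degree w : ℤ)) else 0)
      = 2 * firstZagreb G := by
  have hsplit : ∀ v w : V, (if G.Adj v w then ((G.degree v : ℤ) + (G.degree w : ℤ)) else 0)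
      = (if G.Adj v w then (G.degree v : ℤ) else 0)
        + (if G.Adj v w then (G.degree w : ℤ) else 0) := by
    intro v w; split <;> simp
  simp only [hsplit, Finset.sum_add_distrib]
  have h1 : ∑ v, ∑ w, (if G.Adj v w then (G.degree v : ℤ) else 0)
      = ∑ v, (G.degree v : ℤ) ^ 2 :=
    Finset.sum_congr rfl fun v _ => by rw [sum_ite_adj]; ring
  have h2 : ∑ v, ∑ w, (if G.Adj v w then (G.degree w : ℤ) else 0)
      = ∑ v, (G.degree v : ℤ) ^ 2 := by
    rw [Finset.sum_comm]
    refine Finset.sum_congr rfl fun w _ => ?_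
    have hc : ∀ v : V, G.Adj v w = G.Adj w v := fun v => by rw [adj_comm]
    simp only [hc]
    rw [sum_ite_adj]; ring
  rw [h1, h2, firstZagreb]; ring

lemma sum_adj_one :
    ∑ v, ∑ w, (if G.Adj v w then (1 : ℤ) else 0) = 2 * (G.edgeFinset.card : ℤ) := by
  rw [← sum_deg_int G]
  exact Finset.sum_congr rfl fun v _ => by rw [sum_ite_adj]; ring

end MoreHelpers


open SimpleGraph in
/-- The first hyper Zagreb index of `G₁ ∔ G₂`.  In the final sum, which ranges over the
edges of `S(G₁)`, each edge joins an original vertex `u ∈ V(G₁)` to a subdivision vertex,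
and the summand depends only on the degree in `G₁` of that original endpoint `u`
(subdivision-vertex endpoints contribute `0` via `Sum.elim`). -/
theorem hyperZagreb_subdivisionVertexJoin {V₁ V₂ : Type*} [Fintype V₁] [Fintype V₂]
    [DecidableEq V₁] [DecidableEq V₂] (G₁ : SimpleGraph V₁) (G₂ : SimpleGraph V₂)
    [DecidableRel G₁.Adj] [DecidableRel G₂.Adj]
    (hG₁ : G₁.Connected) (hG₂ : G₂.Connected)
    (n₁ n₂ m₁ m₂ m₁' : ℕ)
    (hn₁ : Fintype.card V₁ = n₁) (hn₂ : Fintype.card V₂ = n₂)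
    (hm₁ : G₁.edgeFinset.card = m₁) (hm₂ : G₂.edgeFinset.card = m₂)
    (hm₁' : (subdivisionGraph G₁).edgeFinset.card = m₁') (hm₁'2 : m₁' = 2 * m₁) :
    hyperZagreb (subdivisionVertexJoin G₁ G₂)
      = m₁ * (5 * firstZagreb G₂ + 4 * m₁ * m₂) + hyperZagreb G₂
        + m₁' * (2 + (n₂ : ℤ)) ^ 2
        + m₁ * ((m₁ : ℤ) + n₂ + 2) * ((n₂ : ℤ) * ((m₁ : ℤ) + n₂ + 2) + 4 * m₂)
        + ∑ e ∈ (subdivisionGraph G₁).edgeFinset,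
            Sym2.lift
              ⟨fun x y =>
                Sum.elim
                  (fun u : V₁ => (G₁.degree u : ℤ) ^ 2 + (4 + 2 * (n₂ : ℤ)) * (G₁.degree u))
                  (fun _ : G₁.edgeSet => 0) x
                + Sum.elim
                  (fun u : V₁ => (G₁.degree u : ℤ) ^ 2 + (4 + 2 * (n₂ : ℤ)) * (G₁.degree u))
                  (fun _ : G₁.edgeSet => 0) y,
                fun _ _ => by ring⟩ e := by
  have adjUU : ∀ u v : V₁, (subdivisionVertexJoin G₁ G₂).Adj (Sum.inl u) (Sum.inl v) = False := fun _ _ => rfl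
  have adjUE : ∀ (u : V₁) (e : G₁.edgeSet), (subdivisionVertexJoin G₁ G₂).Adj (Sum.inl u) (Sum.inr (Sum.inl e)) = (u ∈ (e : Sym2 V₁)) := fun _ _ => rfl
  have adjUV : ∀ (u : V₁) (v : V₂), (subdivisionVertexJoin G₁ G₂).Adj (Sum.inl u) (Sum.inr (Sum.inr v)) = False := fun _ _ => rfl
  have adjEU : ∀ (e : G₁.edgeSet) (u : V₁), (subdivisionVertexJoin G₁ G₂).Adj (Sum.inr (Sum.inl e)) (Sum.inl u) = (u ∈ (e : Sym2 V₁)) := fun _ _ => rfl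
  have adjEE : ∀ e f : G₁.edgeSet, (subdivisionVertexJoin G₁ G₂).Adj (Sum.inr (Sum.inl e)) (Sum.inr (Sum.inl f)) = False := fun _ _ => rfl
  have adjEV : ∀ (e : G₁.edgeSet) (v : V₂), (subdivisionVertexJoin G₁ G₂).Adj (Sum.inr (Sum.inl e)) (Sum.inr (Sum.inr v)) = True := fun _ _ => rfl
  have adjVU : ∀ (v : V₂) (u : V₁), (subdivisionVertexJoin G₁ G₂).Adj (Sum.inr (Sum.inr v)) (Sum.inl u) = False := fun _ _ => rfl
  have adjVE : ∀ (v : V₂) (e : G₁.edgeSet), (subdivisionVertexJoin G₁ G₂).Adj (Sum.inr (Sum.inr v)) (Sum.inr (Sum.inl e)) = True := fun _ _ => rfl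
  have adjVV : ∀ v w : V₂, (subdivisionVertexJoin G₁ G₂).Adj (Sum.inr (Sum.inr v)) (Sum.inr (Sum.inr w)) = G₂.Adj v w := fun _ _ => rfl
  have hLHS : (∑ x, ∑ y, if (subdivisionVertexJoin G₁ G₂).Adj x y then
        ((((subdivisionVertexJoin G₁ G₂).degree x : ℤ)
          + ((subdivisionVertexJoin G₁ G₂).degree y : ℤ)) ^ 2) else 0)
      = 2 * hyperZagreb (subdivisionVertexJoin G₁ G₂) :=
    sum_adj_eq_two_mul _ _ (fun a b => by ring)
  have hcardE : (Fintype.card G₁.edgeSet : ℤ) = (m₁ : ℤ) := by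
    rw [← hm₁]; congr 1; rw [edgeFinset, Set.toFinset_card]
  -- B5 block
  have hB5 : (∑ v, ∑ w, if G₂.Adj v w
        then ((m₁ : ℤ) + (G₂.degree v : ℤ) + ((m₁ : ℤ) + (G₂.degree w : ℤ))) ^ 2 else 0)
      = 2 * hyperZagreb G₂ + 8 * (m₁ : ℤ) * firstZagreb G₂ + 8 * (m₁ : ℤ) ^ 2 * m₂ := by
    have hsplit : ∀ v w : V₂, (if G₂.Adj v w
          then ((m₁ : ℤ) + (G₂.degree v : ℤ) + ((m₁ : ℤ) + (G₂.degree w : ℤ))) ^ 2 else 0)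
        = (if G₂.Adj v w then ((G₂.degree v : ℤ) + (G₂.degree w : ℤ)) ^ 2 else 0)
          + 4 * (m₁ : ℤ) * (if G₂.Adj v w then ((G₂.degree v : ℤ) + (G₂.degree w : ℤ)) else 0)
          + 4 * (m₁ : ℤ) ^ 2 * (if G₂.Adj v w then (1 : ℤ) else 0) := by
      intro v w; split <;> ring
    have hHZ2 : (∑ v, ∑ w, if G₂.Adj v w
          then ((G₂.degree v : ℤ) + (G₂.degree w : ℤ)) ^ 2 else 0) = 2 * hyperZagreb G₂ :=
      sum_adj_eq_two_mul _ _ (fun a b => by ring)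
    simp only [hsplit, Finset.sum_add_distrib, ← Finset.mul_sum]
    rw [hHZ2, sum_adj_deg G₂, sum_adj_one G₂, hm₂]
    ring
  have key : 2 * hyperZagreb (subdivisionVertexJoin G₁ G₂)
      = 2 * (∑ u, (G₁.degree u : ℤ) * ((G₁.degree u : ℤ) + (2 + (n₂ : ℤ))) ^ 2)
        + 2 * (m₁ : ℤ) * (∑ v, ((m₁ : ℤ) + (n₂ : ℤ) + 2 + (G₂.degree v : ℤ)) ^ 2)
        + (2 * hyperZagreb G₂ + 8 * (m₁ : ℤ) * firstZagreb G₂ + 8 * (m₁ : ℤ) ^ 2 * m₂) := by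
    rw [← hLHS]
    simp only [Fintype.sum_sum_type]
    simp only [adjUU, adjUE, adjUV, adjEU, adjEE, adjEV, adjVU, adjVE, adjVV,
      if_true, if_false, Finset.sum_const_zero, add_zero, zero_add]
    simp only [svj_deg_inl G₁ G₂, svj_deg_mid G₁ G₂, svj_deg_inr G₁ G₂, hn₂, hm₁]
    simp only [Finset.sum_add_distrib, Finset.sum_const, Finset.card_univ, nsmul_eq_mul, hcardE]
    simp only [sum_block_uE G₁, sum_block_Eu G₁]
    rw [hB5]
    have h1 : ∑ u, (G₁.degree u : ℤ) * (2 + (n₂ : ℤ) + (G₁.degree u : ℤ)) ^ 2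
        = ∑ u, (G₁.degree u : ℤ) * ((G₁.degree u : ℤ) + (2 + (n₂ : ℤ))) ^ 2 :=
      Finset.sum_congr rfl fun u _ => by ring
    have h2 : ∑ v, (2 + (n₂ : ℤ) + ((m₁ : ℤ) + (G₂.degree v : ℤ))) ^ 2
        = ∑ v, ((m₁ : ℤ) + (n₂ : ℤ) + 2 + (G₂.degree v : ℤ)) ^ 2 :=
      Finset.sum_congr rfl fun v _ => by ring
    have h3 : ∑ v, (m₁ : ℤ) * ((m₁ : ℤ) + (G₂.degree v : ℤ) + (2 + (n₂ : ℤ))) ^ 2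
        = (m₁ : ℤ) * ∑ v, ((m₁ : ℤ) + (n₂ : ℤ) + 2 + (G₂.degree v : ℤ)) ^ 2 := by
      rw [Finset.mul_sum]
      exact Finset.sum_congr rfl fun v _ => by ring
    rw [h1, h2, h3]
    ring
  -- the subdivision-graph sum on the RHS
  have adjsUU : ∀ u v : V₁, (subdivisionGraph G₁).Adj (Sum.inl u) (Sum.inl v) = False := fun _ _ => rfl
  have adjsUE : ∀ (u : V₁) (e : G₁.edgeSet), (subdivisionGraph G₁).Adj (Sum.inl u) (Sum.inr e) = (u ∈ (e : Sym2 V₁)) := fun _ _ => rfl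
  have adjsEU : ∀ (e : G₁.edgeSet) (u : V₁), (subdivisionGraph G₁).Adj (Sum.inr e) (Sum.inl u) = (u ∈ (e : Sym2 V₁)) := fun _ _ => rfl
  have adjsEE : ∀ e f : G₁.edgeSet, (subdivisionGraph G₁).Adj (Sum.inr e) (Sum.inr f) = False := fun _ _ => rfl
  have hSG2 : (∑ x, ∑ y, if (subdivisionGraph G₁).Adj x y then
        (Sum.elim (fun u : V₁ => (G₁.degree u : ℤ) ^ 2 + (4 + 2 * (n₂ : ℤ)) * (G₁.degree u))
          (fun _ : G₁.edgeSet => 0) x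
        + Sum.elim (fun u : V₁ => (G₁.degree u : ℤ) ^ 2 + (4 + 2 * (n₂ : ℤ)) * (G₁.degree u))
          (fun _ : G₁.edgeSet => 0) y) else 0)
      = 2 * ∑ e ∈ (subdivisionGraph G₁).edgeFinset,
          Sym2.lift
            ⟨fun x y =>
              Sum.elim
                (fun u : V₁ => (G₁.degree u : ℤ) ^ 2 + (4 + 2 * (n₂ : ℤ)) * (G₁.degree u))
                (fun _ : G₁.edgeSet => 0) x
              + Sum.elim
                (fun u : V₁ => (G₁.degree u : ℤ) ^ 2 + (4 + 2 * (n₂ : ℤ)) * (G₁.degree u))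
                (fun _ : G₁.edgeSet => 0) y,
              fun _ _ => by ring⟩ e :=
    sum_adj_eq_two_mul _ _ (fun a b => by ring)
  have hSGval : 2 * (∑ e ∈ (subdivisionGraph G₁).edgeFinset,
        Sym2.lift
          ⟨fun x y =>
            Sum.elim
              (fun u : V₁ => (G₁.degree u : ℤ) ^ 2 + (4 + 2 * (n₂ : ℤ)) * (G₁.degree u))
              (fun _ : G₁.edgeSet => 0) x
            + Sum.elim
              (fun u : V₁ => (G₁.degree u : ℤ) ^ 2 + (4 + 2 * (n₂ : ℤ)) * (G₁.degree u))
              (fun _ : G₁.edgeSet => 0) y,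
            fun _ _ => by ring⟩ e)
      = 2 * ∑ u, (G₁.degree u : ℤ)
          * ((G₁.degree u : ℤ) ^ 2 + (4 + 2 * (n₂ : ℤ)) * (G₁.degree u)) := by
    rw [← hSG2]
    simp only [Fintype.sum_sum_type]
    simp only [adjsUU, adjsUE, adjsEU, adjsEE, if_true, if_false, Finset.sum_const_zero,
      add_zero, zero_add, Sum.elim_inl, Sum.elim_inr]
    simp only [sum_block_uE G₁, sum_block_Eu G₁]
    ring
  have hphi : ∑ u, (G₁.degree u : ℤ) * ((G₁.degree u : ℤ) + (2 + (n₂ : ℤ))) ^ 2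
      = (∑ u, (G₁.degree u : ℤ)
          * ((G₁.degree u : ℤ) ^ 2 + (4 + 2 * (n₂ : ℤ)) * (G₁.degree u)))
        + (2 + (n₂ : ℤ)) ^ 2 * (2 * (m₁ : ℤ)) := by
    have hp : ∀ u : V₁, (G₁.degree u : ℤ) * ((G₁.degree u : ℤ) + (2 + (n₂ : ℤ))) ^ 2
        = (G₁.degree u : ℤ) * ((G₁.degree u : ℤ) ^ 2 + (4 + 2 * (n₂ : ℤ)) * (G₁.degree u))
          + (2 + (n₂ : ℤ)) ^ 2 * (G₁.degree u : ℤ) := fun u => by ring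
    simp only [hp, Finset.sum_add_distrib, ← Finset.mul_sum, sum_deg_int G₁, hm₁]
  have hKsum : ∑ v, ((m₁ : ℤ) + (n₂ : ℤ) + 2 + (G₂.degree v : ℤ)) ^ 2
      = (n₂ : ℤ) * ((m₁ : ℤ) + (n₂ : ℤ) + 2) ^ 2
        + 4 * ((m₁ : ℤ) + (n₂ : ℤ) + 2) * (m₂ : ℤ) + firstZagreb G₂ := by
    have hp : ∀ v : V₂, ((m₁ : ℤ) + (n₂ : ℤ) + 2 + (G₂.degree v : ℤ)) ^ 2
        = ((m₁ : ℤ) + (n₂ : ℤ) + 2) ^ 2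
          + 2 * ((m₁ : ℤ) + (n₂ : ℤ) + 2) * (G₂.degree v : ℤ) + (G₂.degree v : ℤ) ^ 2 :=
      fun v => by ring
    simp only [hp, Finset.sum_add_distrib, ← Finset.mul_sum, sum_deg_int G₂, hm₂,
      Finset.sum_const, Finset.card_univ, hn₂, nsmul_eq_mul, firstZagreb]
    ring
  have hm₁'int : (m₁' : ℤ) = 2 * (m₁ : ℤ) := by exact_mod_cast hm₁'2
  apply mul_left_cancel₀ (a := (2 : ℤ)) (by norm_num)
  rw [key, mul_add, mul_add, mul_add, mul_add, hSGval, hphi, hKsum, hm₁'int]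
  ring
end

section
/- Let P_l be the path on l ≥ 2 vertices and C_m the cycle on m ≥ 3 vertices. Then the forgotten topological index of their corona join product satisfies F(P_l ⊕ C_m) = 8l − 14 + 8lm + 3lm(4l − 6) + 12ml² + 6l²m²(l − 1) + 6ml³ + l⁴m(m² + 1). -/
open Finset

/-- Corona join product `G₁ ⊕ G₂`: one copy of `G₁` together with one copy of `G₂` for each
vertex of `G₁`, where every vertex of every copy of `G₂` is joined to every vertex of `G₁`. -/
def coronaJoin {V₁ V₂ : Type*} (G₁ : SimpleGraph V₁) (G₂ : SimpleGraph V₂) :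
    SimpleGraph (V₁ ⊕ V₁ × V₂) where
  Adj x y :=
    match x, y with
    | Sum.inl u, Sum.inl v => G₁.Adj u v
    | Sum.inl _, Sum.inr _ => True
    | Sum.inr _, Sum.inl _ => True
    | Sum.inr (i, u), Sum.inr (j, v) => i = j ∧ G₂.Adj u v
  symm := ⟨by
    rintro (u | ⟨i, u⟩) (v | ⟨j, v⟩) h
    · exact h.symm
    · trivial
    · trivial
    · exact ⟨h.1.symm, h.2.symm⟩⟩
  loopless := ⟨by
    rintro (u | ⟨i, u⟩) h
    · exact G₁.loopless.irrefl u h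
    · exact G₂.loopless.irrefl u h.2⟩

instance coronaJoin.adjDecidable {V₁ V₂ : Type*} (G₁ : SimpleGraph V₁) (G₂ : SimpleGraph V₂)
    [DecidableEq V₁] [DecidableRel G₁.Adj] [DecidableRel G₂.Adj] :
    DecidableRel (coronaJoin G₁ G₂).Adj
  | Sum.inl u, Sum.inl v => inferInstanceAs (Decidable (G₁.Adj u v))
  | Sum.inl _, Sum.inr _ => inferInstanceAs (Decidable True)
  | Sum.inr _, Sum.inl _ => inferInstanceAs (Decidable True)
  | Sum.inr (i, u), Sum.inr (j, v) => inferInstanceAs (Decidable (i = j ∧ G₂.Adj u v))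

lemma coronaJoin_degree_inl {V₁ V₂ : Type*} [Fintype V₁] [Fintype V₂] [DecidableEq V₁]
    [DecidableEq V₂] (G₁ : SimpleGraph V₁) (G₂ : SimpleGraph V₂)
    [DecidableRel G₁.Adj] [DecidableRel G₂.Adj] (v : V₁) :
    (coronaJoin G₁ G₂).degree (Sum.inl v) = G₁.degree v + Fintype.card V₁ * Fintype.card V₂ := by
  have h : (coronaJoin G₁ G₂).neighborFinset (Sum.inl v)
      = (G₁.neighborFinset v).disjSum univ := by
    ext x
    cases x with
    | inl u => rw [SimpleGraph.mem_neighborFinset]; simp [SimpleGraph.mem_neighborFinset, coronaJoin]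
    | inr p => rw [SimpleGraph.mem_neighborFinset]; simp [SimpleGraph.mem_neighborFinset, coronaJoin]
  rw [SimpleGraph.degree, h, Finset.card_disjSum]
  simp [Fintype.card_prod]

lemma coronaJoin_degree_inr {V₁ V₂ : Type*} [Fintype V₁] [Fintype V₂] [DecidableEq V₁]
    [DecidableEq V₂] (G₁ : SimpleGraph V₁) (G₂ : SimpleGraph V₂)
    [DecidableRel G₁.Adj] [DecidableRel G₂.Adj] (i : V₁) (u : V₂) :
    (coronaJoin G₁ G₂).degree (Sum.inr (i, u)) = Fintype.card V₁ + G₂.degree u := by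
  have h : (coronaJoin G₁ G₂).neighborFinset (Sum.inr (i, u))
      = Finset.disjSum univ ({i} ×ˢ G₂.neighborFinset u) := by
    ext x
    cases x with
    | inl w => rw [SimpleGraph.mem_neighborFinset]; simp [SimpleGraph.mem_neighborFinset, coronaJoin]
    | inr p =>
      obtain ⟨j, w⟩ := p
      rw [SimpleGraph.mem_neighborFinset]
      simp only [SimpleGraph.mem_neighborFinset, coronaJoin, Finset.inr_mem_disjSum,
        Finset.mem_product, Finset.mem_singleton]
      constructor
      · rintro ⟨h1, h2⟩; exact ⟨h1.symm, h2⟩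
      · rintro ⟨h1, h2⟩; exact ⟨h1.symm, h2⟩
  rw [SimpleGraph.degree, h, Finset.card_disjSum, Finset.card_product, Finset.card_singleton,
    Finset.card_univ, one_mul, SimpleGraph.degree]

instance pathGraph.adjDecidable (n : ℕ) : DecidableRel (SimpleGraph.pathGraph n).Adj :=
  fun u v => decidable_of_iff (u.val + 1 = v.val ∨ v.val + 1 = u.val)
    SimpleGraph.pathGraph_adj.symm

lemma pathGraph_degree {l : ℕ} (hl : 2 ≤ l) (v : Fin l) :
    (SimpleGraph.pathGraph l).degree v = if v.val = 0 ∨ v.val = l - 1 then 1 else 2 := by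
  classical
  rw [SimpleGraph.degree, SimpleGraph.neighborFinset_eq_filter]
  split_ifs with h
  · rcases h with h | h
    · have : (univ.filter ((SimpleGraph.pathGraph l).Adj v)) = {(⟨1, by omega⟩ : Fin l)} := by
        ext u
        simp only [Finset.mem_filter, Finset.mem_univ, true_and, Finset.mem_singleton,
          SimpleGraph.pathGraph_adj, Fin.ext_iff]
        omega
      rw [this]; simp
    · have : (univ.filter ((SimpleGraph.pathGraph l).Adj v)) = {(⟨l - 2, by omega⟩ : Fin l)} := by
        ext u
        have := u.isLt
        simp only [Finset.mem_filter, Finset.mem_univ, true_and, Finset.mem_singleton,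
          SimpleGraph.pathGraph_adj, Fin.ext_iff]
        omega
      rw [this]; simp
  · push_neg at h
    have hv := v.isLt
    have : (univ.filter ((SimpleGraph.pathGraph l).Adj v))
        = {(⟨v.val - 1, by omega⟩ : Fin l), (⟨v.val + 1, by omega⟩ : Fin l)} := by
      ext u
      simp only [Finset.mem_filter, Finset.mem_univ, true_and, Finset.mem_insert,
        Finset.mem_singleton, SimpleGraph.pathGraph_adj, Fin.ext_iff]
      omega
    rw [this, Finset.card_insert_of_notMem
      (by simp only [Finset.mem_singleton, Fin.ext_iff]; omega), Finset.card_singleton]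

lemma pathGraph_sum {l : ℕ} (hl : 2 ≤ l) (g : ℕ → ℤ) :
    ∑ v : Fin l, g ((SimpleGraph.pathGraph l).degree v)
      = 2 * g 1 + ((l : ℤ) - 2) * g 2 := by
  classical
  have hsum : ∑ v : Fin l, g ((SimpleGraph.pathGraph l).degree v)
      = ∑ v : Fin l, (if v.val = 0 ∨ v.val = l - 1 then g 1 else g 2) := by
    refine Finset.sum_congr rfl fun v _ => ?_
    rw [pathGraph_degree hl v]
    split_ifs <;> rfl
  rw [hsum, Finset.sum_ite, Finset.sum_const, Finset.sum_const]
  have h1 : (univ.filter (fun v : Fin l => v.val = 0 ∨ v.val = l - 1))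
      = {(⟨0, by omega⟩ : Fin l), (⟨l - 1, by omega⟩ : Fin l)} := by
    ext u; simp [Fin.ext_iff]
  have hc1 : (univ.filter (fun v : Fin l => v.val = 0 ∨ v.val = l - 1)).card = 2 := by
    rw [h1, Finset.card_insert_of_notMem
      (by simp only [Finset.mem_singleton, Fin.ext_iff]; omega), Finset.card_singleton]
  have hc2 : (univ.filter (fun v : Fin l => ¬(v.val = 0 ∨ v.val = l - 1))).card = l - 2 := by
    have := Finset.card_filter_add_card_filter_not
      (s := (univ : Finset (Fin l))) (p := fun v : Fin l => v.val = 0 ∨ v.val = l - 1)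
    rw [hc1] at this
    simp only [Finset.card_univ, Fintype.card_fin] at this
    omega
  rw [hc1, hc2]
  simp only [nsmul_eq_mul]
  have : ((l - 2 : ℕ) : ℤ) = (l : ℤ) - 2 := by
    have := Nat.cast_sub hl (R := ℤ); simpa using this
  rw [this]
  push_cast
  ring

theorem forgottenIndex_coronaJoin_path_cycle (l m : ℕ) (hl : 2 ≤ l) (hm : 3 ≤ m) :
    forgottenIndex (coronaJoin (SimpleGraph.pathGraph l) (SimpleGraph.cycleGraph m))
      = 8 * l - 14 + 8 * l * m + 3 * l * m * (4 * (l : ℤ) - 6) + 12 * m * (l : ℤ) ^ 2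
        + 6 * (l : ℤ) ^ 2 * (m : ℤ) ^ 2 * ((l : ℤ) - 1) + 6 * m * (l : ℤ) ^ 3
        + (l : ℤ) ^ 4 * m * ((m : ℤ) ^ 2 + 1) := by
  unfold forgottenIndex
  classical
  have hdeg2 : ∀ v : Fin m, (SimpleGraph.cycleGraph m).degree v = 2 := by
    obtain ⟨k, rfl⟩ : ∃ k, m = k + 3 := ⟨m - 3, by omega⟩
    exact fun v => SimpleGraph.cycleGraph_degree_three_le
  rw [Fintype.sum_sum_type]
  have h1 : ∑ v : Fin l,
      (((coronaJoin (SimpleGraph.pathGraph l) (SimpleGraph.cycleGraph m)).degree (Sum.inl v) : ℤ)) ^ 3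
      = ∑ v : Fin l, (fun d : ℕ => ((d : ℤ) + (l : ℤ) * m) ^ 3)
          ((SimpleGraph.pathGraph l).degree v) := by
    refine Finset.sum_congr rfl fun v _ => ?_
    rw [coronaJoin_degree_inl]
    push_cast [Fintype.card_fin]
    ring
  have h2 : ∑ p : Fin l × Fin m,
      (((coronaJoin (SimpleGraph.pathGraph l) (SimpleGraph.cycleGraph m)).degree (Sum.inr p) : ℤ)) ^ 3
      = (l : ℤ) * m * ((l : ℤ) + 2) ^ 3 := by
    have : ∀ p : Fin l × Fin m,
        (((coronaJoin (SimpleGraph.pathGraph l) (SimpleGraph.cycleGraph m)).degree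
          (Sum.inr p) : ℤ)) ^ 3 = ((l : ℤ) + 2) ^ 3 := by
      rintro ⟨i, u⟩
      rw [coronaJoin_degree_inr, hdeg2]
      push_cast [Fintype.card_fin]
      ring
    rw [Finset.sum_congr rfl fun p _ => this p, Finset.sum_const]
    simp [Fintype.card_prod, mul_assoc]
  rw [h1, h2, pathGraph_sum hl (fun d : ℕ => ((d : ℤ) + (l : ℤ) * m) ^ 3)]
  push_cast
  ring
end
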